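/- Let ρ be a ℂ-algebra automorphism of ℂ[X,Y] commuting with the derivation D defined by D(X) = X, D(Y) = 0 (i.e. ρ(D(f)) = D(ρ(f)) for all f). Then ρ(X) = cX and ρ(Y) = aY + b for some c, a ∈ ℂ*, b ∈ ℂ. -/

import Mathlib

open MvPolynomial

private lemma smul_pderiv_monomial (s : Fin 2 →₀ ℕ) (r : ℂ) :
    (X 0 : MvPolynomial (Fin 2) ℂ) * pderiv 0 (monomial s r) = monomial s ((s 0 : ℂ) * r) := by
  rw [pderiv_monomial]
  by_cases h : s 0 = 0
  · simp [h]
  · have hX : (X 0 : MvPolynomial (Fin 2) ℂ) = monomial (Finsupp.single 0 1) 1 := rfl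
    have hs : Finsupp.single (0 : Fin 2) 1 + (s - Finsupp.single 0 1) = s := by
      ext j
      by_cases hj : j = (0 : Fin 2)
      · subst hj
        simp only [Finsupp.add_apply, Finsupp.tsub_apply, Finsupp.single_eq_same]
        omega
      · simp [Finsupp.single_apply, Ne.symm hj, hj]
    rw [hX, monomial_mul, one_mul, hs, mul_comm]

private lemma rep_aux (f : MvPolynomial (Fin 2) ℂ) (e : ℕ) (h : ∀ s ∈ f.support, s 0 = e) :
    ∃ G : Polynomial ℂ, f = X 0 ^ e * Polynomial.aeval (X 1) G := by
  refine ⟨∑ s ∈ f.support, Polynomial.C (coeff s f) * Polynomial.X ^ (s 1), ?_⟩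
  rw [map_sum, Finset.mul_sum]
  conv_lhs => rw [f.as_sum]
  refine Finset.sum_congr rfl fun s hs => ?_
  rw [monomial_eq, Finsupp.prod_fintype _ _ (fun i => pow_zero _), Fin.prod_univ_two,
    map_mul, map_pow, Polynomial.aeval_C, Polynomial.aeval_X, h s hs]
  rw [MvPolynomial.algebraMap_eq]
  ring

private lemma aeval_X1_inj :
    Function.Injective (Polynomial.aeval (R := ℂ) (X 1 : MvPolynomial (Fin 2) ℂ)) := by
  intro p q h
  have h2 := congrArg
    (MvPolynomial.aeval (R := ℂ) (fun i : Fin 2 => if i = 1 then (Polynomial.X : Polynomial ℂ) else 0)) h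
  rwa [← Polynomial.aeval_algHom_apply, ← Polynomial.aeval_algHom_apply, MvPolynomial.aeval_X,
    if_pos rfl, Polynomial.aeval_X_left_apply, Polynomial.aeval_X_left_apply] at h2

/-- If `ρ` is a `ℂ`-algebra automorphism of `ℂ[X,Y]` commuting with
`D = X ∂/∂X`, then `ρ(X) = cX` and `ρ(Y) = aY + b` with `c, a ∈ ℂ*`. -/
theorem isotropy_X_ddX
    (D : Derivation ℂ (MvPolynomial (Fin 2) ℂ) (MvPolynomial (Fin 2) ℂ))
    (hDX : D (X 0) = X 0)
    (hDY : D (X 1) = 0)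
    (ρ : MvPolynomial (Fin 2) ℂ ≃ₐ[ℂ] MvPolynomial (Fin 2) ℂ)
    (hcomm : ∀ f : MvPolynomial (Fin 2) ℂ, ρ (D f) = D (ρ f)) :
    ∃ c a b : ℂ, c ≠ 0 ∧ a ≠ 0 ∧
      ρ (X 0) = C c * X 0 ∧ ρ (X 1) = C a * X 1 + C b := by
  classical
  -- identify D with X₀·∂/∂X₀
  have hDeq : D = (X 0 : MvPolynomial (Fin 2) ℂ) • pderiv 0 := by
    apply derivation_ext
    intro i
    fin_cases i <;> simp [hDX, hDY]
  have hDmon : ∀ (s : Fin 2 →₀ ℕ) (r : ℂ), D (monomial s r) = monomial s ((s 0 : ℂ) * r) := by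
    intro s r
    rw [hDeq]
    show (X 0 : MvPolynomial (Fin 2) ℂ) * pderiv 0 (monomial s r) = _
    exact smul_pderiv_monomial s r
  have hcoeff : ∀ (f : MvPolynomial (Fin 2) ℂ) (t : Fin 2 →₀ ℕ),
      coeff t (D f) = (t 0 : ℂ) * coeff t f := by
    intro f t
    conv_lhs => rw [f.as_sum, map_sum]
    simp_rw [hDmon]
    rw [coeff_sum, Finset.sum_eq_single t]
    · simp [coeff_monomial]
    · intro s hs hst
      simp [coeff_monomial, hst]
    · intro ht
      simp [coeff_monomial, MvPolynomial.notMem_support_iff.mp ht]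
  -- ρ⁻¹ also commutes with D
  have hcomm' : ∀ f : MvPolynomial (Fin 2) ℂ, ρ.symm (D f) = D (ρ.symm f) := by
    intro f
    have := hcomm (ρ.symm f)
    rw [ρ.apply_symm_apply] at this
    rw [← this, ρ.symm_apply_apply]
  -- eigenvalue-1 elements
  have eig1 : ∀ f : MvPolynomial (Fin 2) ℂ, D f = f → ∀ t ∈ f.support, t 0 = 1 := by
    intro f hf t ht
    have h := hcoeff f t
    rw [hf] at h
    have hc : coeff t f ≠ 0 := MvPolynomial.mem_support_iff.mp ht
    have h2 : ((t 0 : ℂ)) * coeff t f = 1 * coeff t f := by rw [one_mul, ← h]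
    have := mul_right_cancel₀ hc h2
    exact_mod_cast this
  have eig0 : ∀ f : MvPolynomial (Fin 2) ℂ, D f = 0 → ∀ t ∈ f.support, t 0 = 0 := by
    intro f hf t ht
    have h := hcoeff f t
    rw [hf] at h
    have hc : coeff t f ≠ 0 := MvPolynomial.mem_support_iff.mp ht
    have h2 : ((t 0 : ℂ)) * coeff t f = 0 := by rw [← h, coeff_zero]
    rcases mul_eq_zero.mp h2 with h0 | h0
    · exact_mod_cast h0
    · exact absurd h0 hc
  -- representations
  obtain ⟨G, hG⟩ := rep_aux (ρ (X 0)) 1 (eig1 _ (by rw [← hcomm, hDX]))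
  obtain ⟨H, hH⟩ := rep_aux (ρ.symm (X 0)) 1 (eig1 _ (by rw [← hcomm', hDX]))
  obtain ⟨P, hP⟩ := rep_aux (ρ (X 1)) 0 (eig0 _ (by rw [← hcomm, hDY, map_zero]))
  obtain ⟨Q, hQ⟩ := rep_aux (ρ.symm (X 1)) 0 (eig0 _ (by rw [← hcomm', hDY, map_zero]))
  rw [pow_one] at hG hH
  rw [pow_zero, one_mul] at hP hQ
  -- ρ as an AlgHom for aeval composition
  have key : ∀ (R : Polynomial ℂ), ρ (Polynomial.aeval (X 1 : MvPolynomial (Fin 2) ℂ) R)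
      = Polynomial.aeval (ρ (X 1)) R := fun R =>
    (Polynomial.aeval_algHom_apply ρ.toAlgHom (X 1) R).symm
  -- Q ∘ P = X
  have hQP : Q.comp P = Polynomial.X := by
    apply aeval_X1_inj
    rw [Polynomial.aeval_comp, ← hP, ← key, ← hQ, ρ.apply_symm_apply, Polynomial.aeval_X]
  have hdegP : P.natDegree = 1 := by
    have := congrArg Polynomial.natDegree hQP
    rw [Polynomial.natDegree_comp, Polynomial.natDegree_X] at this
    exact Nat.eq_one_of_mul_eq_one_left this
  have hP0 : P ≠ 0 := fun h0 => by simp [h0] at hdegP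
  have hPne : P.coeff 1 ≠ 0 := by
    have hl : P.leadingCoeff ≠ 0 := Polynomial.leadingCoeff_ne_zero.mpr hP0
    simpa [Polynomial.leadingCoeff, hdegP] using hl
  -- c for X0
  have hX0 : X 0 = ρ (ρ.symm (X 0 : MvPolynomial (Fin 2) ℂ)) := (ρ.apply_symm_apply _).symm
  rw [hH, map_mul, hG, key, hP, ← Polynomial.aeval_comp] at hX0
  have hGH : G * H.comp P = 1 := by
    apply aeval_X1_inj
    rw [map_mul, map_one]
    have hx : (X 0 : MvPolynomial (Fin 2) ℂ) * 1
        = X 0 * (Polynomial.aeval (X 1 : MvPolynomial (Fin 2) ℂ) G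
          * Polynomial.aeval (X 1 : MvPolynomial (Fin 2) ℂ) (H.comp P)) := by
      rw [mul_one]
      nth_rewrite 1 [hX0]
      ring
    exact (mul_left_cancel₀ (X_ne_zero 0) hx).symm
  obtain ⟨c, hcunit, hcG⟩ := Polynomial.isUnit_iff.mp (IsUnit.of_mul_eq_one _ hGH)
  refine ⟨c, P.coeff 1, P.coeff 0, hcunit.ne_zero, hPne, ?_, ?_⟩
  · rw [hG, ← hcG, Polynomial.aeval_C, MvPolynomial.algebraMap_eq, mul_comm]
  · rw [hP]
    conv_lhs => rw [Polynomial.eq_X_add_C_of_natDegree_le_one hdegP.le]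
    simp [MvPolynomial.algebraMap_eq]
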